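/- For every N ∈ ℕ and p ∈ [1,∞), the Gromov–Hausdorff distance between the closed unit ball of ℝ^N with the ℓ^p-metric and the closed unit ball of ℝ^N with the ℓ^1-metric is at most 2^p − 2. -/

import Mathlib

open Real

noncomputable def sgnp (p t : ℝ) : ℝ := if 0 ≤ t then t ^ p else -((-t) ^ p)

section Scalar

variable {p : ℝ}

lemma sgnp_of_nonneg {t : ℝ} (ht : 0 ≤ t) : sgnp p t = t ^ p := if_pos ht

lemma sgnp_of_neg {t : ℝ} (ht : t < 0) : sgnp p t = -((-t) ^ p) := if_neg (not_le.mpr ht)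

lemma sgnp_neg (hp : 1 ≤ p) (t : ℝ) : sgnp p (-t) = - sgnp p t := by
  have hp0 : p ≠ 0 := by positivity
  rcases lt_trichotomy t 0 with h | h | h
  · rw [sgnp_of_neg h, sgnp_of_nonneg (by linarith : (0:ℝ) ≤ -t)]; ring
  · subst h; simp [sgnp, Real.zero_rpow hp0]
  · rw [sgnp_of_nonneg h.le, sgnp_of_neg (by linarith : -t < 0), neg_neg]

lemma abs_sgnp (t : ℝ) : |sgnp p t| = |t| ^ p := by
  rcases le_or_gt 0 t with h | h
  · rw [sgnp_of_nonneg h, abs_of_nonneg h, abs_of_nonneg (rpow_nonneg h p)]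
  · rw [sgnp_of_neg h, abs_of_neg h, abs_neg,
      abs_of_nonneg (rpow_nonneg (by linarith : (0:ℝ) ≤ -t) p)]

lemma rpow_superadd (hp : 1 ≤ p) {a b : ℝ} (ha : 0 ≤ a) (hb : 0 ≤ b) :
    a ^ p + b ^ p ≤ (a + b) ^ p := by
  have h := NNReal.add_rpow_le_rpow_add a.toNNReal b.toNNReal hp
  have h2 := NNReal.coe_le_coe.2 h
  push_cast at h2
  rwa [Real.coe_toNNReal a ha, Real.coe_toNNReal b hb] at h2

lemma rpow_add_le (hp : 1 ≤ p) {a b : ℝ} (ha : 0 ≤ a) (hb : 0 ≤ b) :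
    (a + b) ^ p ≤ 2 ^ (p - 1) * (a ^ p + b ^ p) := by
  have h := NNReal.rpow_add_le_mul_rpow_add_rpow a.toNNReal b.toNNReal hp
  have h2 := NNReal.coe_le_coe.2 h
  push_cast at h2
  rwa [Real.coe_toNNReal a ha, Real.coe_toNNReal b hb] at h2

lemma tangent_line (hp : 1 ≤ p) {c x : ℝ} (hc : 0 < c) (hx : 0 ≤ x) :
    c ^ p + p * c ^ (p - 1) * (x - c) ≤ x ^ p := by
  have hs : (-1:ℝ) ≤ x / c - 1 := by
    have : 0 ≤ x / c := div_nonneg hx hc.le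
    linarith
  have h := one_add_mul_self_le_rpow_one_add hs hp
  have h2 : (1:ℝ) + (x / c - 1) = x / c := by ring
  rw [h2] at h
  have hcp : (0:ℝ) < c ^ p := rpow_pos_of_pos hc p
  have h3 : (x / c) ^ p = x ^ p / c ^ p := Real.div_rpow hx hc.le p
  have h4 := mul_le_mul_of_nonneg_left h hcp.le
  rw [h3] at h4
  have h5 : c ^ p * (x ^ p / c ^ p) = x ^ p := by field_simp
  rw [h5] at h4
  have h6 : c ^ (p - 1) = c ^ p / c := by
    rw [Real.rpow_sub hc, Real.rpow_one]
  calc c ^ p + p * c ^ (p - 1) * (x - c) = c ^ p * (1 + p * (x / c - 1)) := by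
        rw [h6]; field_simp
    _ ≤ x ^ p := h4

end Scalar
section Scalar2

variable {p : ℝ}

lemma amgm_23 (hp : 1 ≤ p) : 2 - (2:ℝ) ^ (p - 1) ≤ (2/3:ℝ) ^ (p - 1) := by
  set x := (2/3:ℝ) ^ (p - 1) with hxdef
  set y := (2:ℝ) ^ (p - 1) with hydef
  have hx : (0:ℝ) ≤ x := rpow_nonneg (by norm_num) _
  have hy : (0:ℝ) ≤ y := rpow_nonneg (by norm_num) _
  have hxy : 1 ≤ x * y := by
    rw [hxdef, hydef, ← Real.mul_rpow (by norm_num) (by norm_num)]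
    have h1 : ((1:ℝ)) ^ (p - 1) ≤ ((2/3:ℝ) * 2) ^ (p - 1) :=
      Real.rpow_le_rpow zero_le_one (by norm_num) (by linarith)
    simpa using h1
  have h1 : 1 ≤ Real.sqrt (x * y) := by
    rw [show (1:ℝ) = Real.sqrt 1 by simp]
    exact Real.sqrt_le_sqrt hxy
  rw [Real.sqrt_mul hx] at h1
  nlinarith [sq_nonneg (Real.sqrt x - Real.sqrt y), Real.sq_sqrt hx, Real.sq_sqrt hy,
    Real.sqrt_nonneg x, Real.sqrt_nonneg y]

lemma coreC (hp : 1 ≤ p) {a b : ℝ} (hb : 0 ≤ b) (hba : b ≤ a) :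
    a ^ p - b ^ p ≤ (a - b) ^ p + ((2:ℝ) ^ (p - 1) - 1) * (a ^ p + b ^ p) := by
  have hp0 : p ≠ 0 := by positivity
  have ha : 0 ≤ a := hb.trans hba
  set K := (2:ℝ) ^ (p - 1) with hK
  have hK0 : (0:ℝ) ≤ K := rpow_nonneg (by norm_num) _
  rcases eq_or_lt_of_le ha with h | h
  · have hb0 : b = 0 := le_antisymm (by linarith) hb
    rw [hb0, ← h]
    simp [Real.zero_rpow hp0]
  · -- 0 < a
    have t1 := tangent_line hp (show (0:ℝ) < 2*a/3 by linarith) (sub_nonneg.2 hba)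
    have t2 := tangent_line hp (show (0:ℝ) < a/3 by linarith) hb
    have g3 : (2*a/3:ℝ) ^ (p - 1) = K * (a/3) ^ (p - 1) := by
      rw [show (2*a/3:ℝ) = 2 * (a/3) by ring,
        Real.mul_rpow (by norm_num) (by linarith)]
    have t2' := mul_le_mul_of_nonneg_left t2 hK0
    have expand : K * ((a/3:ℝ) ^ p + p * (a/3) ^ (p - 1) * (b - a/3))
        = K * (a/3) ^ p + p * (K * (a/3) ^ (p - 1)) * (b - a/3) := by ring
    rw [expand, ← g3] at t2'
    have hzero : p * (2*a/3:ℝ) ^ (p - 1) * ((a - b) - 2*a/3)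
        + p * (2*a/3) ^ (p - 1) * (b - a/3) = 0 := by ring
    -- identity for the constant part
    have e23 : ((2:ℝ)/3) ^ p = (2/3:ℝ) ^ (p - 1) * (2/3) := by
      rw [← Real.rpow_add_one (by norm_num : (2/3:ℝ) ≠ 0) (p - 1)]
      norm_num
    have e13 : ((1:ℝ)/3) ^ p = (1/3:ℝ) ^ (p - 1) * (1/3) := by
      rw [← Real.rpow_add_one (by norm_num : (1/3:ℝ) ≠ 0) (p - 1)]
      norm_num
    have e2313 : K * ((1:ℝ)/3) ^ (p - 1) = (2/3:ℝ) ^ (p - 1) := by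
      rw [hK, ← Real.mul_rpow (by norm_num) (by norm_num)]
      norm_num
    have g1 : (2*a/3:ℝ) ^ p = (2/3:ℝ) ^ p * a ^ p := by
      rw [show (2*a/3:ℝ) = (2/3) * a by ring, Real.mul_rpow (by norm_num) ha]
    have g2 : (a/3:ℝ) ^ p = (1/3:ℝ) ^ p * a ^ p := by
      rw [show (a/3:ℝ) = (1/3) * a by ring, Real.mul_rpow (by norm_num) ha]
    have e3 : (2*a/3:ℝ) ^ p + K * (a/3) ^ p = (2/3:ℝ) ^ (p - 1) * a ^ p := by
      rw [g1, g2, e23, e13]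
      have : K * ((1/3:ℝ) ^ (p-1) * (1/3) * a ^ p)
          = (K * (1/3:ℝ) ^ (p-1)) * (1/3) * a ^ p := by ring
      rw [this, e2313]
      ring
    have key : (2/3:ℝ) ^ (p - 1) * a ^ p ≤ (a - b) ^ p + K * b ^ p := by
      rw [← e3]
      linarith [t1, t2', hzero]
    have am := amgm_23 hp
    have hap : (0:ℝ) ≤ a ^ p := rpow_nonneg ha p
    have final : (2 - K) * a ^ p ≤ (a - b) ^ p + K * b ^ p := by
      have := mul_le_mul_of_nonneg_right am hap
      calc (2 - K) * a ^ p ≤ (2/3:ℝ) ^ (p - 1) * a ^ p := this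
        _ ≤ _ := key
    nlinarith [final]

end Scalar2
section Scalar3

variable {p : ℝ}

lemma L1aux (hp : 1 ≤ p) {a b : ℝ} (hba : b ≤ a) :
    |a - b| ^ p ≤ (2:ℝ) ^ (p - 1) * |sgnp p a - sgnp p b| := by
  have hK1 : (1:ℝ) ≤ (2:ℝ) ^ (p - 1) := by
    have h := Real.rpow_le_rpow zero_le_one one_le_two (by linarith : (0:ℝ) ≤ p - 1)
    simpa using h
  have habs : |a - b| = a - b := abs_of_nonneg (sub_nonneg.2 hba)
  rcases le_or_gt 0 b with hb | hb
  · -- 0 ≤ b ≤ a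
    have ha : 0 ≤ a := hb.trans hba
    have hmono : b ^ p ≤ a ^ p := Real.rpow_le_rpow hb hba (by linarith)
    rw [habs, sgnp_of_nonneg ha, sgnp_of_nonneg hb, abs_of_nonneg (by linarith)]
    have hsuper := rpow_superadd hp (sub_nonneg.2 hba) hb
    rw [show a - b + b = a by ring] at hsuper
    have h2 : a ^ p - b ^ p ≤ (2:ℝ) ^ (p - 1) * (a ^ p - b ^ p) :=
      le_mul_of_one_le_left (by linarith) hK1
    linarith
  · rcases le_or_gt 0 a with ha | ha
    · -- b < 0 ≤ a
      rw [habs, sgnp_of_nonneg ha, sgnp_of_neg hb]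
      have hnb : (0:ℝ) ≤ -b := by linarith
      have h1 : (a - b) ^ p ≤ (2:ℝ) ^ (p - 1) * (a ^ p + (-b) ^ p) := by
        have := rpow_add_le hp ha hnb
        rwa [show a + -b = a - b by ring] at this
      rw [show a ^ p - -((-b) ^ p) = a ^ p + (-b) ^ p by ring,
        abs_of_nonneg (by positivity)]
      exact h1
    · -- b ≤ a < 0
      have hb' : (0:ℝ) ≤ -a := by linarith
      have hba' : -a ≤ -b := by linarith
      have hmono : (-a) ^ p ≤ (-b) ^ p := Real.rpow_le_rpow hb' hba' (by linarith)
      rw [habs, sgnp_of_neg ha, sgnp_of_neg hb]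
      have hsup := rpow_superadd hp (sub_nonneg.2 hba') hb'
      rw [show -b - -a + -a = -b by ring] at hsup
      rw [show -((-a) ^ p) - -((-b) ^ p) = (-b) ^ p - (-a) ^ p by ring,
        abs_of_nonneg (by linarith), show a - b = -b - -a by ring]
      have h2 : (-b) ^ p - (-a) ^ p ≤ (2:ℝ) ^ (p - 1) * ((-b) ^ p - (-a) ^ p) :=
        le_mul_of_one_le_left (by linarith) hK1
      linarith

lemma L1 (hp : 1 ≤ p) (a b : ℝ) :
    |a - b| ^ p ≤ (2:ℝ) ^ (p - 1) * |sgnp p a - sgnp p b| := by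
  rcases le_total b a with h | h
  · exact L1aux hp h
  · rw [abs_sub_comm, abs_sub_comm (sgnp p a)]
    exact L1aux hp h

lemma L2aux (hp : 1 ≤ p) {a b : ℝ} (hba : b ≤ a) :
    |sgnp p a - sgnp p b| ≤ |a - b| ^ p + ((2:ℝ) ^ (p - 1) - 1) * (|a| ^ p + |b| ^ p) := by
  have hK1 : (1:ℝ) ≤ (2:ℝ) ^ (p - 1) := by
    have h := Real.rpow_le_rpow zero_le_one one_le_two (by linarith : (0:ℝ) ≤ p - 1)
    simpa using h
  have habs : |a - b| = a - b := abs_of_nonneg (sub_nonneg.2 hba)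
  rcases le_or_gt 0 b with hb | hb
  · -- 0 ≤ b ≤ a
    have ha : 0 ≤ a := hb.trans hba
    have hmono : b ^ p ≤ a ^ p := Real.rpow_le_rpow hb hba (by linarith)
    rw [habs, sgnp_of_nonneg ha, sgnp_of_nonneg hb, abs_of_nonneg (by linarith),
      abs_of_nonneg ha, abs_of_nonneg hb]
    exact coreC hp hb hba
  · rcases le_or_gt 0 a with ha | ha
    · -- b < 0 ≤ a
      rw [habs, sgnp_of_nonneg ha, sgnp_of_neg hb, abs_of_nonneg ha, abs_of_neg hb]
      have hnb : (0:ℝ) ≤ -b := by linarith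
      rw [show a ^ p - -((-b) ^ p) = a ^ p + (-b) ^ p by ring,
        abs_of_nonneg (add_nonneg (rpow_nonneg ha p) (rpow_nonneg hnb p))]
      have hsup := rpow_superadd hp ha hnb
      rw [show a + -b = a - b by ring] at hsup
      nlinarith [rpow_nonneg ha p, rpow_nonneg hnb p]
    · -- b ≤ a < 0
      have hb' : (0:ℝ) ≤ -a := by linarith
      have hba' : -a ≤ -b := by linarith
      rw [habs, sgnp_of_neg ha, sgnp_of_neg hb, abs_of_neg ha, abs_of_neg hb]
      rw [show -((-a) ^ p) - -((-b) ^ p) = (-b) ^ p - (-a) ^ p by ring,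
        abs_of_nonneg (sub_nonneg.2 (Real.rpow_le_rpow hb' hba' (by linarith))),
        show a - b = -b - -a by ring]
      have := coreC hp hb' hba'
      linarith [this]

lemma L2 (hp : 1 ≤ p) (a b : ℝ) :
    |sgnp p a - sgnp p b| ≤ |a - b| ^ p + ((2:ℝ) ^ (p - 1) - 1) * (|a| ^ p + |b| ^ p) := by
  rcases le_total b a with h | h
  · exact L2aux hp h
  · rw [abs_sub_comm (sgnp p a) (sgnp p b), abs_sub_comm a b]
    linarith [L2aux hp h]

lemma sgnp_sgnp_inv (hp : 1 ≤ p) (t : ℝ) : sgnp p (sgnp p⁻¹ t) = t := by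
  have hp0 : (0:ℝ) < p := by linarith
  have hinv : p⁻¹ * p = 1 := inv_mul_cancel₀ hp0.ne'
  rcases lt_trichotomy t 0 with h | h | h
  · have hnt : (0:ℝ) ≤ -t := by linarith
    have hpos : (0:ℝ) < (-t) ^ p⁻¹ := Real.rpow_pos_of_pos (by linarith) _
    rw [sgnp_of_neg h, sgnp_of_neg (neg_lt_zero.mpr hpos), neg_neg,
      ← Real.rpow_mul hnt, hinv, Real.rpow_one, neg_neg]
  · subst h
    simp [sgnp, Real.zero_rpow (by positivity : p⁻¹ ≠ 0),
      Real.zero_rpow (by positivity : p ≠ 0)]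
  · rw [sgnp_of_nonneg h.le, sgnp_of_nonneg (Real.rpow_nonneg h.le _),
      ← Real.rpow_mul h.le, hinv, Real.rpow_one]

end Scalar3
section Vector

open Metric

variable {p : ℝ} {N : ℕ}

lemma distP [Fact (1 ≤ ENNReal.ofReal p)] (hp : 1 ≤ p) (x y : PiLp (ENNReal.ofReal p) fun _ : Fin N => ℝ) :
    dist x y = (∑ i, |x i - y i| ^ p) ^ (1/p) := by
  have hp0 : (0:ℝ) < p := by linarith
  have hq : (ENNReal.ofReal p).toReal = p := ENNReal.toReal_ofReal hp0.le
  rw [PiLp.dist_eq_sum (by rw [hq]; exact hp0)]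
  simp [hq, Real.dist_eq]

lemma dist1 (x y : PiLp 1 fun _ : Fin N => ℝ) :
    dist x y = ∑ i, |x i - y i| := by
  rw [PiLp.dist_eq_sum (by norm_num : (0:ℝ) < ENNReal.toReal 1)]
  simp [Real.dist_eq, ENNReal.toReal_one]

lemma memP [Fact (1 ≤ ENNReal.ofReal p)] (hp : 1 ≤ p) (x : PiLp (ENNReal.ofReal p) fun _ : Fin N => ℝ) :
    x ∈ closedBall (0 : PiLp (ENNReal.ofReal p) fun _ : Fin N => ℝ) 1
      ↔ ∑ i, |x i| ^ p ≤ 1 := by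
  have hp0 : (0:ℝ) < p := by linarith
  have hS : (0:ℝ) ≤ ∑ i, |x i| ^ p :=
    Finset.sum_nonneg fun i _ => Real.rpow_nonneg (abs_nonneg _) _
  rw [Metric.mem_closedBall, distP hp x 0]
  simp only [PiLp.zero_apply, sub_zero]
  constructor
  · intro h
    have e : ((∑ i, |x i| ^ p) ^ (1/p)) ^ p = ∑ i, |x i| ^ p := by
      rw [← Real.rpow_mul hS, one_div, inv_mul_cancel₀ hp0.ne', Real.rpow_one]
    calc ∑ i, |x i| ^ p = ((∑ i, |x i| ^ p) ^ (1/p)) ^ p := e.symm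
      _ ≤ 1 ^ p := Real.rpow_le_rpow (Real.rpow_nonneg hS _) h hp0.le
      _ = 1 := Real.one_rpow p
  · intro h
    calc (∑ i, |x i| ^ p) ^ (1/p) ≤ 1 ^ (1/p) :=
        Real.rpow_le_rpow hS h (by positivity)
      _ = 1 := Real.one_rpow _

lemma mem1 (y : PiLp 1 fun _ : Fin N => ℝ) :
    y ∈ closedBall (0 : PiLp 1 fun _ : Fin N => ℝ) 1 ↔ ∑ i, |y i| ≤ 1 := by
  rw [Metric.mem_closedBall, dist1 y 0]
  simp only [PiLp.zero_apply, sub_zero]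

end Vector
section Vector2

open Metric

variable {p : ℝ} {N : ℕ}

noncomputable def Fmap (p : ℝ) {N : ℕ} (x : PiLp (ENNReal.ofReal p) fun _ : Fin N => ℝ) :
    PiLp 1 fun _ : Fin N => ℝ :=
  (WithLp.equiv 1 (∀ _ : Fin N, ℝ)).symm fun i => sgnp p (x i)

lemma Fmap_apply (p : ℝ) {N : ℕ} (x : PiLp (ENNReal.ofReal p) fun _ : Fin N => ℝ)
    (i : Fin N) : Fmap p x i = sgnp p (x i) := rfl

noncomputable def Gmap (p : ℝ) {N : ℕ} (y : PiLp 1 fun _ : Fin N => ℝ) :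
    PiLp (ENNReal.ofReal p) fun _ : Fin N => ℝ :=
  (WithLp.equiv (ENNReal.ofReal p) (∀ _ : Fin N, ℝ)).symm fun i => sgnp p⁻¹ (y i)

lemma Gmap_apply (p : ℝ) {N : ℕ} (y : PiLp 1 fun _ : Fin N => ℝ)
    (i : Fin N) : Gmap p y i = sgnp p⁻¹ (y i) := rfl

lemma Fmap_Gmap (hp : 1 ≤ p) {N : ℕ} (y : PiLp 1 fun _ : Fin N => ℝ) :
    Fmap p (Gmap p y) = y := by
  refine PiLp.ext fun i => ?_
  rw [Fmap_apply, Gmap_apply]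
  exact sgnp_sgnp_inv hp (y i)

lemma Hbound [Fact (1 ≤ ENNReal.ofReal p)] (hp : 1 ≤ p)
    (x y : PiLp (ENNReal.ofReal p) fun _ : Fin N => ℝ)
    (hx : x ∈ closedBall (0 : PiLp (ENNReal.ofReal p) fun _ : Fin N => ℝ) 1)
    (hy : y ∈ closedBall (0 : PiLp (ENNReal.ofReal p) fun _ : Fin N => ℝ) 1) :
    |dist x y - dist (Fmap p x) (Fmap p y)| ≤ 4 * ((2:ℝ) ^ (p - 1) - 1) := by
  have hp0 : (0:ℝ) < p := by linarith
  set K := (2:ℝ) ^ (p - 1) with hK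
  have hK1 : (1:ℝ) ≤ K := by
    have h := Real.rpow_le_rpow zero_le_one one_le_two (by linarith : (0:ℝ) ≤ p - 1)
    simpa [hK] using h
  have hK0 : (0:ℝ) < K := by linarith
  set d := dist x y with hd
  set D := dist (Fmap p x) (Fmap p y) with hDdef
  have hd0 : (0:ℝ) ≤ d := dist_nonneg
  have hD0 : (0:ℝ) ≤ D := dist_nonneg
  have hd2 : d ≤ 2 := by
    have h1 := dist_triangle x (0 : PiLp (ENNReal.ofReal p) fun _ : Fin N => ℝ) y
    rw [Metric.mem_closedBall] at hx hy
    have h2 : dist (0 : PiLp (ENNReal.ofReal p) fun _ : Fin N => ℝ) y = dist y 0 :=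
      dist_comm _ _
    rw [hd]; linarith
  have hsum0 : (0:ℝ) ≤ ∑ i, |x i - y i| ^ p :=
    Finset.sum_nonneg fun i _ => Real.rpow_nonneg (abs_nonneg _) _
  have hS : d ^ p = ∑ i, |x i - y i| ^ p := by
    rw [hd, distP hp x y, ← Real.rpow_mul hsum0, one_div, inv_mul_cancel₀ hp0.ne',
      Real.rpow_one]
  have hDsum : D = ∑ i, |sgnp p (x i) - sgnp p (y i)| := by
    rw [hDdef, dist1 (Fmap p x) (Fmap p y)]
    simp only [Fmap_apply]
  have hsumx : ∑ i, |x i| ^ p ≤ 1 := (memP hp x).1 hx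
  have hsumy : ∑ i, |y i| ^ p ≤ 1 := (memP hp y).1 hy
  -- upper bound : D ≤ d ^ p + (K-1) * 2
  have hub : D ≤ d ^ p + (K - 1) * 2 := by
    have h1 : D ≤ ∑ i, (|x i - y i| ^ p + (K - 1) * (|x i| ^ p + |y i| ^ p)) := by
      rw [hDsum]
      exact Finset.sum_le_sum fun i _ => L2 hp (x i) (y i)
    have h2 : ∑ i, (|x i - y i| ^ p + (K - 1) * (|x i| ^ p + |y i| ^ p))
        = (∑ i, |x i - y i| ^ p)
          + (K - 1) * ((∑ i, |x i| ^ p) + (∑ i, |y i| ^ p)) := by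
      rw [Finset.sum_add_distrib, ← Finset.mul_sum, Finset.sum_add_distrib]
    have h3 : (K - 1) * ((∑ i, |x i| ^ p) + (∑ i, |y i| ^ p)) ≤ (K - 1) * 2 :=
      mul_le_mul_of_nonneg_left (by linarith) (by linarith)
    rw [h2] at h1
    rw [hS]
    linarith
  have hdp : d ^ p ≤ K * d := by
    rcases eq_or_lt_of_le hd0 with h0 | h0
    · rw [← h0, Real.zero_rpow hp0.ne']
      positivity
    · have e2 : d ^ p = d ^ (p - 1) * d := by
        rw [Real.rpow_sub_one h0.ne']; field_simp
      rw [e2]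
      exact mul_le_mul_of_nonneg_right
        (by rw [hK]; exact Real.rpow_le_rpow hd0 hd2 (by linarith)) hd0
  have hupper : D - d ≤ 4 * (K - 1) := by nlinarith [hub, hdp, hd2, hd0, hK1]
  -- lower bound
  have hlb : d ^ p ≤ K * D := by
    rw [hS, hDsum, Finset.mul_sum]
    exact Finset.sum_le_sum fun i _ => L1 hp (x i) (y i)
  have hlower : d - D ≤ 4 * (K - 1) := by
    rcases eq_or_lt_of_le hd0 with h0 | h0
    · rw [← h0]; linarith
    · have hDlb : d ^ p / K ≤ D := by
        rw [div_le_iff₀ hK0]; linarith [hlb]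
      set t := d / 2 with ht
      have ht0 : (0:ℝ) < t := by rw [ht]; linarith
      have ht1 : t ≤ 1 := by rw [ht]; linarith
      have e2K : (2:ℝ) ^ p = 2 * K := by
        rw [hK, Real.rpow_sub_one (two_ne_zero : (2:ℝ) ≠ 0)]
        ring
      have hdpt : d ^ p / K = 2 * t ^ p := by
        have : d = 2 * t := by rw [ht]; ring
        rw [this, Real.mul_rpow (by norm_num) ht0.le, e2K]
        field_simp
      have htp : t ^ p = t * t ^ (p - 1) := by
        rw [Real.rpow_sub_one ht0.ne']; field_simp
      -- key : t - t * t^(p-1) ≤ p - 1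
      have hexp : Real.log t * (p - 1) + 1 ≤ t ^ (p - 1) := by
        rw [Real.rpow_def_of_pos ht0]
        exact Real.add_one_le_exp _
      have h2 : t * (-Real.log t) ≤ 1 - t := by
        have hl := Real.log_le_sub_one_of_pos (inv_pos.mpr ht0)
        rw [Real.log_inv] at hl
        have h3 := mul_le_mul_of_nonneg_left hl ht0.le
        have h4 : t * (t⁻¹ - 1) = 1 - t := by field_simp
        linarith [h3, h4.symm.le, h4.le]
      have hkey : t - t * t ^ (p - 1) ≤ p - 1 := by
        have h1 : 1 - t ^ (p - 1) ≤ (p - 1) * (-Real.log t) := by nlinarith [hexp]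
        have h5 := mul_le_mul_of_nonneg_left h1 ht0.le
        have h6 := mul_le_mul_of_nonneg_left h2 (by linarith : (0:ℝ) ≤ p - 1)
        nlinarith [h5, h6, ht0.le, ht1]
      have hhalf : p - 1 ≤ 2 * (K - 1) := by
        have hKexp : Real.log 2 * (p - 1) + 1 ≤ K := by
          rw [hK, Real.rpow_def_of_pos two_pos]
          exact Real.add_one_le_exp _
        have hl2 : (0.6931471803 : ℝ) < Real.log 2 := Real.log_two_gt_d9
        nlinarith [hKexp, hl2, hp]
      calc d - D ≤ d - d ^ p / K := by linarith
        _ = 2 * (t - t * t ^ (p - 1)) := by rw [hdpt, htp, ht]; ring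
        _ ≤ 2 * (p - 1) := by linarith
        _ ≤ 4 * (K - 1) := by linarith
  rw [abs_sub_le_iff]
  exact ⟨hlower, hupper⟩

end Vector2
section Vector3

open Metric

variable {p : ℝ} {N : ℕ}

lemma Fmap_mem [Fact (1 ≤ ENNReal.ofReal p)] (hp : 1 ≤ p)
    (x : PiLp (ENNReal.ofReal p) fun _ : Fin N => ℝ)
    (hx : x ∈ closedBall (0 : PiLp (ENNReal.ofReal p) fun _ : Fin N => ℝ) 1) :
    Fmap p x ∈ closedBall (0 : PiLp 1 fun _ : Fin N => ℝ) 1 := by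
  rw [mem1]
  have h1 : ∑ i, |Fmap p x i| = ∑ i, |x i| ^ p :=
    Finset.sum_congr rfl fun i _ => by rw [Fmap_apply]; exact abs_sgnp (x i)
  rw [h1]
  exact (memP hp x).1 hx

lemma Gmap_mem [Fact (1 ≤ ENNReal.ofReal p)] (hp : 1 ≤ p)
    (y : PiLp 1 fun _ : Fin N => ℝ)
    (hy : y ∈ closedBall (0 : PiLp 1 fun _ : Fin N => ℝ) 1) :
    Gmap p y ∈ closedBall (0 : PiLp (ENNReal.ofReal p) fun _ : Fin N => ℝ) 1 := by
  have hp0 : (0:ℝ) < p := by linarith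
  rw [memP hp]
  have h1 : ∑ i, |Gmap p y i| ^ p = ∑ i, |y i| := by
    refine Finset.sum_congr rfl fun i _ => ?_
    rw [Gmap_apply, abs_sgnp, ← Real.rpow_mul (abs_nonneg _),
      inv_mul_cancel₀ hp0.ne', Real.rpow_one]
  rw [h1]
  exact (mem1 y).1 hy

end Vector3

theorem stmt_7 (N : ℕ) (p : ℝ) (hp : 1 ≤ p) :
    letI : Fact (1 ≤ ENNReal.ofReal p) := ⟨ENNReal.one_le_ofReal.mpr hp⟩
    letI : CompactSpace
        ↥(Metric.closedBall (0 : PiLp (ENNReal.ofReal p) fun _ : Fin N => ℝ) 1) :=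
      isCompact_iff_compactSpace.mp (isCompact_closedBall 0 1)
    letI : Nonempty
        ↥(Metric.closedBall (0 : PiLp (ENNReal.ofReal p) fun _ : Fin N => ℝ) 1) :=
      ⟨⟨0, Metric.mem_closedBall_self zero_le_one⟩⟩
    letI : CompactSpace ↥(Metric.closedBall (0 : PiLp 1 fun _ : Fin N => ℝ) 1) :=
      isCompact_iff_compactSpace.mp (isCompact_closedBall 0 1)
    letI : Nonempty ↥(Metric.closedBall (0 : PiLp 1 fun _ : Fin N => ℝ) 1) :=
      ⟨⟨0, Metric.mem_closedBall_self zero_le_one⟩⟩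
    GromovHausdorff.ghDist
        ↥(Metric.closedBall (0 : PiLp (ENNReal.ofReal p) fun _ : Fin N => ℝ) 1)
        ↥(Metric.closedBall (0 : PiLp 1 fun _ : Fin N => ℝ) 1) ≤ (2:ℝ) ^ p - 2 := by
  letI : Fact (1 ≤ ENNReal.ofReal p) := ⟨ENNReal.one_le_ofReal.mpr hp⟩
  letI : CompactSpace
      ↥(Metric.closedBall (0 : PiLp (ENNReal.ofReal p) fun _ : Fin N => ℝ) 1) :=
    isCompact_iff_compactSpace.mp (isCompact_closedBall 0 1)
  letI : Nonempty
      ↥(Metric.closedBall (0 : PiLp (ENNReal.ofReal p) fun _ : Fin N => ℝ) 1) :=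
    ⟨⟨0, Metric.mem_closedBall_self zero_le_one⟩⟩
  letI : CompactSpace ↥(Metric.closedBall (0 : PiLp 1 fun _ : Fin N => ℝ) 1) :=
    isCompact_iff_compactSpace.mp (isCompact_closedBall 0 1)
  letI : Nonempty ↥(Metric.closedBall (0 : PiLp 1 fun _ : Fin N => ℝ) 1) :=
    ⟨⟨0, Metric.mem_closedBall_self zero_le_one⟩⟩
  show GromovHausdorff.ghDist
      ↥(Metric.closedBall (0 : PiLp (ENNReal.ofReal p) fun _ : Fin N => ℝ) 1)
      ↥(Metric.closedBall (0 : PiLp 1 fun _ : Fin N => ℝ) 1) ≤ (2:ℝ) ^ p - 2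
  set X := ↥(Metric.closedBall (0 : PiLp (ENNReal.ofReal p) fun _ : Fin N => ℝ) 1) with hX
  set Y := ↥(Metric.closedBall (0 : PiLp 1 fun _ : Fin N => ℝ) 1) with hY
  let Φ : ↥(Set.univ : Set X) → Y := fun z => ⟨Fmap p z.1.1, Fmap_mem hp _ z.1.2⟩
  have hs : ∀ x : X, ∃ y ∈ (Set.univ : Set X), dist x y ≤ (0:ℝ) :=
    fun x => ⟨x, Set.mem_univ x, by simp⟩
  have hs' : ∀ yy : Y, ∃ z : ↥(Set.univ : Set X), dist yy (Φ z) ≤ (0:ℝ) := by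
    intro yy
    refine ⟨⟨⟨Gmap p yy.1, Gmap_mem hp _ yy.2⟩, Set.mem_univ _⟩, ?_⟩
    rw [Subtype.dist_eq]
    show dist yy.1 (Fmap p (Gmap p yy.1)) ≤ 0
    rw [Fmap_Gmap hp, dist_self]
  have H : ∀ x y : ↥(Set.univ : Set X),
      |dist x y - dist (Φ x) (Φ y)| ≤ 4 * ((2:ℝ) ^ (p - 1) - 1) := by
    intro x y
    rw [Subtype.dist_eq x y, Subtype.dist_eq x.1 y.1, Subtype.dist_eq (Φ x) (Φ y)]
    exact Hbound hp x.1.1 y.1.1 x.1.2 y.1.2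
  have hmain := GromovHausdorff.ghDist_le_of_approx_subsets Φ hs hs' H
  have e2K : (2:ℝ) ^ p = 2 * (2:ℝ) ^ (p - 1) := by
    rw [Real.rpow_sub_one (two_ne_zero : (2:ℝ) ≠ 0)]
    ring
  exact hmain.trans (by linarith)
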